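/- arXiv:2403.14087 — 3 statements merged into one kernel-verified Lean document; each statement's English description precedes it below -/
import Mathlib

section
/- Let m be a real number with m > e^e, and set γ = (ln ln m)/(ln m). Then γ^{2/γ} · m < 1. -/
/-- Key: `2 log l < l` for `l > 1`. -/
lemma two_log_lt (l : ℝ) (hl : 1 < l) : 2 * Real.log l < l := by
  have h0 : (0:ℝ) < l := lt_trans one_pos hl
  have hs : 0 < Real.sqrt l := Real.sqrt_pos.mpr h0
  have hs1 : 1 < Real.sqrt l := by
    have := Real.sqrt_lt_sqrt (le_of_lt one_pos) hl
    simpa using this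
  have hlog : Real.log l = 2 * Real.log (Real.sqrt l) := (Real.log_sqrt h0.le).symm ▸ by ring
  have hlt : Real.log (Real.sqrt l) < Real.sqrt l - 1 :=
    Real.log_lt_sub_one_of_pos hs (ne_of_gt hs1)
  have hsq : Real.sqrt l ^ 2 = l := Real.sq_sqrt h0.le
  nlinarith [sq_nonneg (Real.sqrt l - 2)]

/-- For `m > e^e` and `γ = (ln ln m)/(ln m)`, we have `γ^(2/γ) · m < 1`. -/
theorem stmt_7 (m : ℝ) (hm : Real.exp (Real.exp 1) < m) :
    (Real.log (Real.log m) / Real.log m) ^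
        ((2 : ℝ) / (Real.log (Real.log m) / Real.log m)) * m < 1 := by
  have hm0 : 0 < m := lt_trans (Real.exp_pos _) hm
  set L := Real.log m with hLdef
  have hL : Real.exp 1 < L := (Real.lt_log_iff_exp_lt hm0).mpr hm
  have hL0 : 0 < L := lt_trans (Real.exp_pos 1) hL
  set l := Real.log L with hldef
  have hl1 : 1 < l := by
    have := Real.log_lt_log (Real.exp_pos 1) hL
    simpa [Real.log_exp] using this
  have hl0 : 0 < l := lt_trans one_pos hl1
  have hγ : 0 < l / L := div_pos hl0 hL0
  have hmL : m = Real.exp L := (Real.exp_log hm0).symm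
  rw [Real.rpow_def_of_pos hγ, hmL, ← Real.exp_add]
  rw [show (1:ℝ) = Real.exp 0 by simp]
  apply Real.exp_lt_exp.mpr
  have hlogγ : Real.log (l / L) = Real.log l - l := by
    rw [Real.log_div (ne_of_gt hl0) (ne_of_gt hL0), ← hldef]
  rw [hlogγ]
  have h2 : 2 * Real.log l < l := two_log_lt l hl1
  have : (Real.log l - l) * ((2:ℝ) / (l / L)) + L = L * (2 * Real.log l - l) / l := by
    field_simp
    ring
  rw [this]
  exact div_neg_of_neg_of_pos (mul_neg_of_pos_of_neg hL0 (by linarith)) hl0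
end

section
/- Let U be a finite set, let O_1, ..., O_k be subsets of U with |O_1 ∪ ... ∪ O_k| = opt, and let I_1, ..., I_k be independent random variables, each uniformly distributed on {1, ..., k}. Suppose S_1, ..., S_k are random subsets of U such that each S_j is a (deterministic) function of (I_1, ..., I_j) and satisfies |S_j \ C_{j−1}| ≥ |O_{I_j} \ C_{j−1}| pointwise, where C_j = S_1 ∪ ... ∪ S_j and C_0 = ∅. Then E[|S_1 ∪ ... ∪ S_k|] ≥ (1 − (1 − 1/k)^k) · opt. -/
open MeasureTheory Finset
open scoped ENNReal

lemma exchange_aux {k : ℕ} (j : Fin k) {M : Type*} [AddCommMonoid M]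
    (g : Fin k → (Fin k → Fin k) → M)
    (hg : ∀ (i : Fin k) (v v' : Fin k → Fin k), (∀ t, t ≠ j → v t = v' t) → g i v = g i v') :
    ∑ v : Fin k → Fin k, ∑ i : Fin k, g i v
      = k • ∑ v : Fin k → Fin k, g (v j) v := by
  classical
  set e := Equiv.funSplitAt j (Fin k) with he
  have hsum : ∀ h : (Fin k → Fin k) → M,
      ∑ v : Fin k → Fin k, h v = ∑ p : Fin k × ({ t : Fin k // t ≠ j } → Fin k), h (e.symm p) :=
    fun h => (Equiv.sum_comp e.symm h).symm
  have hj : ∀ (a : Fin k) (w : { t : Fin k // t ≠ j } → Fin k), e.symm (a, w) j = a := by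
    intro a w; simp [he, Equiv.funSplitAt]
  have hoff : ∀ (a a' : Fin k) (w : { t : Fin k // t ≠ j } → Fin k) (t : Fin k), t ≠ j →
      e.symm (a, w) t = e.symm (a', w) t := by
    intro a a' w t ht; simp [he, Equiv.funSplitAt, ht]
  rw [hsum (fun v => ∑ i, g i v), hsum (fun v => g (v j) v)]
  rw [Fintype.sum_prod_type, Fintype.sum_prod_type]
  have h1 : ∀ (a : Fin k) (w : { t : Fin k // t ≠ j } → Fin k),
      ∑ i, g i (e.symm (a, w)) = ∑ i, g i (e.symm (i, w)) := by
    intro a w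
    refine Finset.sum_congr rfl fun i _ => hg i _ _ (fun t ht => hoff a i w t ht)
  calc ∑ a : Fin k, ∑ w, ∑ i, g i (e.symm (a, w))
      = ∑ a : Fin k, ∑ w, ∑ i, g i (e.symm (i, w)) := by
        refine Finset.sum_congr rfl fun a _ => Finset.sum_congr rfl fun w _ => h1 a w
    _ = k • ∑ w, ∑ i : Fin k, g i (e.symm (i, w)) := by
        rw [Finset.sum_const, Finset.card_univ, Fintype.card_fin]
    _ = k • ∑ a : Fin k, ∑ w, g (e.symm (a, w) j) (e.symm (a, w)) := by
        rw [Finset.sum_comm]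
        congr 1
        refine Finset.sum_congr rfl fun a _ => Finset.sum_congr rfl fun w _ => ?_
        rw [hj]

/-- The standard recurrence. -/
lemma recur_aux {k : ℕ} (hk : 0 < k) {c : ℝ} (hc : 0 ≤ c) (b : ℕ → ℝ) (hb0 : b 0 = 0)
    (hstep : ∀ n < k, c - b (n + 1) ≤ (1 - 1 / (k : ℝ)) * (c - b n)) :
    (1 - (1 - 1 / (k : ℝ)) ^ k) * c ≤ b k := by
  have hk' : (1 : ℝ) ≤ (k : ℝ) := by exact_mod_cast hk
  have hq : 0 ≤ 1 - 1 / (k : ℝ) := by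
    have : 1 / (k : ℝ) ≤ 1 := by
      rw [div_le_one (by linarith)]; exact hk'
    linarith
  have key : ∀ n ≤ k, c - b n ≤ (1 - 1 / (k : ℝ)) ^ n * c := by
    intro n hn
    induction n with
    | zero => simp [hb0]
    | succ m ih =>
      calc c - b (m + 1) ≤ (1 - 1 / (k : ℝ)) * (c - b m) := hstep m (by omega)
        _ ≤ (1 - 1 / (k : ℝ)) * ((1 - 1 / (k : ℝ)) ^ m * c) :=
            mul_le_mul_of_nonneg_left (ih (by omega)) hq
        _ = (1 - 1 / (k : ℝ)) ^ (m + 1) * c := by ring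
  have := key k le_rfl
  linarith

/-- The deterministic combinatorial core. -/
lemma comb_aux {U : Type*} [DecidableEq U] {k : ℕ} (hk : 0 < k)
    (O : Fin k → Finset U) (s : Fin k → (Fin k → Fin k) → Finset U)
    (hdep : ∀ (j : Fin k) (v v' : Fin k → Fin k), (∀ i ≤ j, v i = v' i) → s j v = s j v')
    (hg : ∀ (j : Fin k) (v : Fin k → Fin k),
      ((O (v j) \ (Finset.univ.filter (fun t : Fin k => t < j)).biUnion (fun t => s t v)).card)
        ≤ ((s j v \ (Finset.univ.filter (fun t : Fin k => t < j)).biUnion (fun t => s t v)).card)) :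
    (1 - (1 - 1 / (k : ℝ)) ^ k) * ((Finset.univ.biUnion O).card : ℝ) ≤
      (1 / (k : ℝ)) ^ k * ∑ v : Fin k → Fin k, ((Finset.univ.biUnion fun j => s j v).card : ℝ) := by
  classical
  set c : ℝ := ((Finset.univ.biUnion O).card : ℝ) with hc
  set Cn : ℕ → (Fin k → Fin k) → Finset U :=
    fun n v => (Finset.univ.filter fun t : Fin k => (t : ℕ) < n).biUnion (fun t => s t v) with hCn
  set B : ℕ → ℝ := fun n => ∑ v : Fin k → Fin k, ((Cn n v).card : ℝ) with hB
  have hkpos : (0 : ℝ) < k := by exact_mod_cast hk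
  have hP : (0 : ℝ) < (k : ℝ) ^ k := by positivity
  -- the `C` set at step `j.val` is the one in the hypotheses
  have hCfil : ∀ (j : Fin k) (v : Fin k → Fin k),
      (Finset.univ.filter fun t : Fin k => t < j).biUnion (fun t => s t v) = Cn (j : ℕ) v := by
    intro j v
    simp only [hCn, Fin.lt_def]
  -- Cn n only depends on coordinates < n
  have hCndep : ∀ (n : ℕ) (v v' : Fin k → Fin k),
      (∀ t : Fin k, (t : ℕ) < n → v t = v' t) → Cn n v = Cn n v' := by
    intro n v v' hvv
    refine Finset.biUnion_congr rfl fun t ht => ?_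
    simp only [Finset.mem_filter] at ht
    exact hdep t v v' fun i hi => hvv i (lt_of_le_of_lt (by exact_mod_cast hi) ht.2)
  -- main step estimate
  have hBstep : ∀ n < k, (k : ℝ) ^ k * c + (k : ℝ) * B n ≤ (k : ℝ) * B (n + 1) + B n := by
    intro n hn
    set j : Fin k := ⟨n, hn⟩ with hj
    -- Cn (n+1) v = s j v ∪ Cn n v
    have hCsucc : ∀ v, Cn (n + 1) v = s j v ∪ Cn n v := by
      intro v
      have : (Finset.univ.filter fun t : Fin k => (t : ℕ) < n + 1)
          = insert j (Finset.univ.filter fun t : Fin k => (t : ℕ) < n) := by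
        ext t
        simp only [Finset.mem_filter, Finset.mem_insert, Finset.mem_univ, true_and, hj,
          Fin.ext_iff]
        omega
      simp only [hCn]
      rw [this, Finset.biUnion_insert]
    have hcard : ∀ v, ((Cn (n + 1) v).card : ℝ)
        = ((s j v \ Cn n v).card : ℝ) + ((Cn n v).card : ℝ) := by
      intro v
      rw [hCsucc v, ← Finset.card_sdiff_add_card]
      push_cast; ring
    -- greedy bound
    have hgr : ∀ v, ((O (v j) \ Cn n v).card : ℝ) ≤ ((s j v \ Cn n v).card : ℝ) := by
      intro v
      have := hg j v
      rw [hCfil j v] at this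
      exact_mod_cast this
    set G : ℝ := ∑ v : Fin k → Fin k, ((O (v j) \ Cn n v).card : ℝ) with hG
    have hB1 : B n + G ≤ B (n + 1) := by
      rw [hB]
      simp only
      rw [hG, ← Finset.sum_add_distrib]
      refine Finset.sum_le_sum fun v _ => ?_
      rw [hcard v]
      have := hgr v
      linarith
    -- exchange
    have hex : ∑ v : Fin k → Fin k, ∑ i : Fin k, ((O i \ Cn n v).card : ℝ) = (k : ℝ) * G := by
      rw [hG, exchange_aux j (fun i v => ((O i \ Cn n v).card : ℝ))
        (fun i v v' hvv => by
          rw [hCndep n v v' fun t ht => hvv t (by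
            intro hteq
            rw [hteq] at ht
            simp [hj] at ht)])]
      rw [nsmul_eq_mul]
    -- coverage bound per v
    have hcov : ∀ v : Fin k → Fin k, c ≤ ∑ i : Fin k, ((O i \ Cn n v).card : ℝ)
        + ((Cn n v).card : ℝ) := by
      intro v
      have h1 : (Finset.univ.biUnion O) \ Cn n v
          = Finset.univ.biUnion (fun i => O i \ Cn n v) := by
        ext x
        simp only [Finset.mem_sdiff, Finset.mem_biUnion, Finset.mem_univ, true_and]
        tauto
      have h2 : (Finset.univ.biUnion O).card
          ≤ ((Finset.univ.biUnion O) \ Cn n v).card + (Cn n v).card :=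
        Finset.card_le_card_sdiff_add_card
      have h3 : ((Finset.univ.biUnion O) \ Cn n v).card
          ≤ ∑ i : Fin k, (O i \ Cn n v).card := by
        rw [h1]; exact Finset.card_biUnion_le
      rw [hc]
      push_cast
      have := le_trans h2 (by omega : ((Finset.univ.biUnion O) \ Cn n v).card + (Cn n v).card
        ≤ (∑ i : Fin k, (O i \ Cn n v).card) + (Cn n v).card)
      exact_mod_cast this
    have hWcard : (Fintype.card (Fin k → Fin k) : ℝ) = (k : ℝ) ^ k := by
      simp [Fintype.card_fun]
    have hsumcov : (k : ℝ) ^ k * c ≤ (k : ℝ) * G + B n := by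
      have := Finset.sum_le_sum fun v (_ : v ∈ (Finset.univ : Finset (Fin k → Fin k))) => hcov v
      rw [Finset.sum_const, Finset.card_univ, nsmul_eq_mul, hWcard,
        Finset.sum_add_distrib, hex] at this
      rw [hB]
      exact this
    nlinarith [hB1, hsumcov, hkpos]
  -- wrap up with the recurrence
  have hb0 : B 0 = 0 := by
    rw [hB]
    simp [hCn]
  have hBk : B k = ∑ v : Fin k → Fin k, ((Finset.univ.biUnion fun j => s j v).card : ℝ) := by
    rw [hB]
    refine Finset.sum_congr rfl fun v _ => ?_
    congr 2
    simp only [hCn]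
    rw [Finset.filter_true_of_mem fun (t : Fin k) _ => t.isLt]
  have hrec := recur_aux hk (by positivity : (0:ℝ) ≤ c)
    (fun n => B n / (k : ℝ) ^ k) (by show B 0 / (k : ℝ) ^ k = 0; rw [hb0]; simp) ?_
  · replace hrec : (1 - (1 - 1 / (k : ℝ)) ^ k) * c ≤ B k / (k : ℝ) ^ k := hrec
    have : B k / (k : ℝ) ^ k = (1 / (k : ℝ)) ^ k * ∑ v : Fin k → Fin k,
        ((Finset.univ.biUnion fun j => s j v).card : ℝ) := by
      rw [hBk, div_pow, one_pow, div_mul_eq_mul_div, one_mul]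
    rw [this] at hrec
    exact hrec
  · intro n hn
    have hB := hBstep n hn
    show c - B (n + 1) / (k : ℝ) ^ k ≤ (1 - 1 / (k : ℝ)) * (c - B n / (k : ℝ) ^ k)
    have e1 : c - B (n + 1) / (k : ℝ) ^ k = ((k : ℝ) ^ k * c - B (n + 1)) / (k : ℝ) ^ k := by
      field_simp
    have e2 : (1 - 1 / (k : ℝ)) * (c - B n / (k : ℝ) ^ k)
        = (((k : ℝ) - 1) * ((k : ℝ) ^ k * c - B n)) / ((k : ℝ) * (k : ℝ) ^ k) := by
      have hkne : (k : ℝ) ≠ 0 := ne_of_gt hkpos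
      have hPne : (k : ℝ) ^ k ≠ 0 := ne_of_gt hP
      field_simp
    rw [e1, e2, div_le_div_iff₀ hP (by positivity)]
    nlinarith [hB, hP]


/-- Warm-up theorem for the random-order model.  `I_1, …, I_k` are independent and
uniform on `{1,…,k}`; each `S_j` is a deterministic function of `(I_1, …, I_j)` and
covers, pointwise, at least as many new elements as `O_{I_j}` does relative to
`C_{j-1} = S_1 ∪ ⋯ ∪ S_{j-1}`.  Then `E[|S_1 ∪ ⋯ ∪ S_k|] ≥ (1 - (1 - 1/k)^k)·opt`,
where `opt = |O_1 ∪ ⋯ ∪ O_k|`. -/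
theorem stmt_12 {U : Type*} [DecidableEq U]
    {Ω : Type*} [MeasurableSpace Ω] (μ : Measure Ω) [IsProbabilityMeasure μ]
    (k : ℕ) (hk : 0 < k) (O : Fin k → Finset U) (opt : ℕ)
    (hopt : opt = (Finset.univ.biUnion O).card)
    (I : Fin k → Ω → Fin k)
    (hImeas : ∀ j, Measurable (I j))
    (hIindep : ProbabilityTheory.iIndepFun I μ)
    (hIunif : ∀ (j : Fin k) (i : Fin k), μ {ω | I j ω = i} = 1 / k)
    (S : Fin k → Ω → Finset U)
    (hSfun : ∀ (j : Fin k) (ω ω' : Ω), (∀ i ≤ j, I i ω = I i ω') → S j ω = S j ω')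
    (hgreedy : ∀ (j : Fin k) (ω : Ω),
      ((O (I j ω) \
          (Finset.univ.filter (fun t : Fin k => t < j)).biUnion (fun t => S t ω)).card : ℕ) ≤
        ((S j ω \
          (Finset.univ.filter (fun t : Fin k => t < j)).biUnion (fun t => S t ω)).card : ℕ)) :
    (1 - (1 - 1 / (k : ℝ)) ^ k) * opt ≤
      ∫ ω, (((Finset.univ.biUnion fun j => S j ω).card : ℕ) : ℝ) ∂μ := by
  classical
  -- the atoms
  set A : (Fin k → Fin k) → Set Ω := fun v => {ω | ∀ j, I j ω = v j} with hA
  have hAset : ∀ v, A v = ⋂ j, I j ⁻¹' {v j} := by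
    intro v; ext ω; simp [hA, Set.mem_iInter]
  have hAmeas : ∀ v, MeasurableSet (A v) := by
    intro v; rw [hAset]
    exact MeasurableSet.iInter fun j => (hImeas j) (measurableSet_singleton _)
  have hmu : ∀ v, μ (A v) = ((1 : ℝ≥0∞) / k) ^ k := by
    intro v
    have h := (ProbabilityTheory.iIndepFun_iff_measure_inter_preimage_eq_mul.mp hIindep)
      (Finset.univ) (sets := fun j => {v j}) (fun i _ => measurableSet_singleton _)
    have h2 : (⋂ i ∈ Finset.univ, I i ⁻¹' {v i}) = A v := by
      rw [hAset v]
      simp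
    rw [h2] at h
    rw [h]
    have h3 : ∀ i : Fin k, μ (I i ⁻¹' {v i}) = (1 : ℝ≥0∞) / k := by
      intro i
      have : I i ⁻¹' {v i} = {ω | I i ω = v i} := by ext ω; simp
      rw [this, hIunif i (v i)]
    rw [Finset.prod_congr rfl fun i _ => h3 i, Finset.prod_const, Finset.card_univ,
      Fintype.card_fin]
  have hμne : ∀ v, μ (A v) ≠ 0 := by
    intro v
    rw [hmu v]
    apply pow_ne_zero
    simp only [ne_eq, ENNReal.div_eq_zero_iff, one_ne_zero, false_or]
    exact ENNReal.natCast_ne_top k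
  -- choose representatives
  have hch : ∀ v : Fin k → Fin k, ∃ ω, ∀ j, I j ω = v j := by
    intro v
    by_contra h
    push_neg at h
    have : A v = ∅ := by
      ext ω; simp only [hA, Set.mem_setOf_eq, Set.mem_empty_iff_false, iff_false]
      intro hall
      obtain ⟨j, hj⟩ := h ω
      exact hj (hall j)
    exact hμne v (by rw [this, measure_empty])
  choose w hw using hch
  set s : Fin k → (Fin k → Fin k) → Finset U := fun j v => S j (w v) with hs
  -- every S j ω is s j applied to the realized vector
  have hSrep : ∀ (j : Fin k) (ω : Ω), S j ω = s j (fun i => I i ω) := by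
    intro j ω
    exact hSfun j ω (w fun i => I i ω) fun i _ => (hw (fun i => I i ω) i).symm
  -- hypotheses of the combinatorial lemma
  have hdep : ∀ (j : Fin k) (v v' : Fin k → Fin k), (∀ i ≤ j, v i = v' i) → s j v = s j v' := by
    intro j v v' hvv
    exact hSfun j (w v) (w v') fun i hi => by rw [hw v i, hw v' i, hvv i hi]
  have hgc : ∀ (j : Fin k) (v : Fin k → Fin k),
      ((O (v j) \ (Finset.univ.filter (fun t : Fin k => t < j)).biUnion (fun t => s t v)).card)
        ≤ ((s j v \ (Finset.univ.filter (fun t : Fin k => t < j)).biUnion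
            (fun t => s t v)).card) := by
    intro j v
    have := hgreedy j (w v)
    rw [hw v j] at this
    exact this
  -- compute the integral
  set F : (Fin k → Fin k) → ℝ := fun v => ((Finset.univ.biUnion fun j => s j v).card : ℝ)
    with hF
  have hfeq : ∀ ω : Ω, (((Finset.univ.biUnion fun j => S j ω).card : ℕ) : ℝ)
      = F (fun i => I i ω) := by
    intro ω
    simp only [hF]
    congr 2
    exact Finset.biUnion_congr rfl fun j _ => hSrep j ω
  have hsplit : ∀ ω : Ω, F (fun i => I i ω)
      = ∑ v : Fin k → Fin k, (A v).indicator (fun _ => F v) ω := by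
    intro ω
    rw [Finset.sum_eq_single (fun i => I i ω)]
    · rw [Set.indicator_of_mem]
      simp [hA]
    · intro v _ hv
      rw [Set.indicator_of_notMem]
      simp only [hA, Set.mem_setOf_eq]
      intro hall
      exact hv (funext fun i => (hall i).symm)
    · intro h
      exact absurd (Finset.mem_univ _) h
  have hint : ∫ ω, (((Finset.univ.biUnion fun j => S j ω).card : ℕ) : ℝ) ∂μ
      = ∑ v : Fin k → Fin k, (μ (A v)).toReal • F v := by
    calc ∫ ω, (((Finset.univ.biUnion fun j => S j ω).card : ℕ) : ℝ) ∂μ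
        = ∫ ω, ∑ v : Fin k → Fin k, (A v).indicator (fun _ => F v) ω ∂μ := by
          refine integral_congr_ae (Filter.Eventually.of_forall fun ω => ?_)
          exact (hfeq ω).trans (hsplit ω)
      _ = ∑ v : Fin k → Fin k, ∫ ω, (A v).indicator (fun _ => F v) ω ∂μ := by
          refine integral_finset_sum _ fun v _ => ?_
          exact (integrable_const (F v)).indicator (hAmeas v)
      _ = ∑ v : Fin k → Fin k, (μ (A v)).toReal • F v := by
          refine Finset.sum_congr rfl fun v _ => ?_
          rw [integral_indicator_const _ (hAmeas v)]
          rfl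
  have htoReal : ∀ v, (μ (A v)).toReal = (1 / (k : ℝ)) ^ k := by
    intro v
    rw [hmu v, ENNReal.toReal_pow, ENNReal.toReal_div, ENNReal.toReal_one,
      ENNReal.toReal_natCast]
  rw [hint]
  have : ∑ v : Fin k → Fin k, (μ (A v)).toReal • F v
      = (1 / (k : ℝ)) ^ k * ∑ v : Fin k → Fin k, F v := by
    rw [Finset.mul_sum]
    refine Finset.sum_congr rfl fun v _ => ?_
    rw [htoReal v, smul_eq_mul]
  rw [this, hopt]
  exact comb_aux hk O s hdep hgc
end

section
/- Let U be a finite set, let k be a positive integer, let v > 0 and α ≥ 0 be real numbers, and for A ⊆ U define u(A) = (1 − α/k)·v − |A|. Let A_0 ⊆ A_1 ⊆ ... ⊆ A_q be subsets of U such that |A_j \ A_{j−1}| ≥ v/k for every j ∈ [q]. Then u(A_q) ≤ exp(−q/k) · u(A_0). -/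
/-- Residual decay: with `u(A) = (1 - α/k)·v - |A|`, if `A_0 ⊆ A_1 ⊆ ⋯ ⊆ A_q` and each
step adds at least `v/k` new elements, then `u(A_q) ≤ exp(-q/k)·u(A_0)`. -/
theorem stmt_15 {U : Type*} [Fintype U] [DecidableEq U]
    (k : ℕ) (hk : 0 < k) (v α : ℝ) (hv : 0 < v) (hα : 0 ≤ α)
    (q : ℕ) (A : ℕ → Finset U)
    (hmono : ∀ j, 1 ≤ j → j ≤ q → A (j - 1) ⊆ A j)
    (hgain : ∀ j, 1 ≤ j → j ≤ q → v / k ≤ ((A j \ A (j - 1)).card : ℝ)) :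
    (1 - α / k) * v - ((A q).card : ℝ) ≤
      Real.exp (-(q : ℝ) / k) * ((1 - α / k) * v - ((A 0).card : ℝ)) := by
  have hk' : (0:ℝ) < k := by exact_mod_cast hk
  set c : ℝ := (1 - α / k) * v with hc
  -- one-step bound
  have hstep : ∀ j, 1 ≤ j → j ≤ q →
      c - ((A j).card : ℝ) ≤ Real.exp (-(1:ℝ)/k) * (c - ((A (j-1)).card : ℝ)) := by
    intro j h1 h2
    have hsub := hmono j h1 h2
    have hcard : ((A j \ A (j-1)).card : ℝ) + ((A (j-1)).card : ℝ) = ((A j).card : ℝ) := by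
      exact_mod_cast congrArg (Nat.cast (R := ℝ)) (Finset.card_sdiff_add_card_eq_card hsub)
    have hg := hgain j h1 h2
    have hx : c - ((A (j-1)).card : ℝ) ≤ v := by
      have h1' : c ≤ v := by
        have : α / k * v ≥ 0 := by positivity
        nlinarith
      have : (0:ℝ) ≤ ((A (j-1)).card : ℝ) := by positivity
      linarith
    have he1 : 1 - Real.exp (-(1:ℝ)/k) ≤ 1/k := by
      have := Real.add_one_le_exp (-(1:ℝ)/k)
      have hdiv : (-1:ℝ)/(k:ℝ) + 1/(k:ℝ) = 0 := by ring
      linarith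
    have he2 : 0 ≤ 1 - Real.exp (-(1:ℝ)/k) := by
      have : Real.exp (-(1:ℝ)/k) ≤ 1 := by
        rw [Real.exp_le_one_iff, neg_div]
        exact neg_nonpos.mpr (by positivity)
      linarith
    have key : (c - ((A (j-1)).card : ℝ)) * (1 - Real.exp (-(1:ℝ)/k)) ≤ v / k := by
      calc (c - ((A (j-1)).card : ℝ)) * (1 - Real.exp (-(1:ℝ)/k))
          ≤ v * (1 - Real.exp (-(1:ℝ)/k)) := by nlinarith
        _ ≤ v * (1/k) := by nlinarith
        _ = v / k := by ring
    nlinarith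
  -- induction
  have main : ∀ n, n ≤ q → c - ((A n).card : ℝ) ≤
      Real.exp (-(n : ℝ)/k) * (c - ((A 0).card : ℝ)) := by
    intro n
    induction n with
    | zero => intro _; simp
    | succ m ih =>
      intro hm
      have hm' : m ≤ q := Nat.le_of_succ_le hm
      have h1 : 1 ≤ m + 1 := Nat.le_add_left 1 m
      have hs := hstep (m+1) h1 hm
      simp only [Nat.add_sub_cancel] at hs
      have ihm := ih hm'
      have hpos : (0:ℝ) < Real.exp (-(1:ℝ)/k) := Real.exp_pos _
      calc c - ((A (m+1)).card : ℝ)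
          ≤ Real.exp (-(1:ℝ)/k) * (c - ((A m).card : ℝ)) := hs
        _ ≤ Real.exp (-(1:ℝ)/k) * (Real.exp (-(m : ℝ)/k) * (c - ((A 0).card : ℝ))) := by
            nlinarith
        _ = Real.exp (-((m+1 : ℕ) : ℝ)/k) * (c - ((A 0).card : ℝ)) := by
            rw [← mul_assoc, ← Real.exp_add]
            push_cast
            ring_nf
    
  exact main q le_rfl
end
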